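/- Let p₁, p₂, p₃ be positive integers and T any subspace of ℝ^{p₁ p₂ p₃}. Then there exist subspaces S_i ⊆ ℝ^{p_i} (i = 1, 2, 3) such that (1) T ⊆ S₁ ⊗ S₂ ⊗ S₃, and (2) for any subspaces S_i' ⊆ ℝ^{p_i} with T ⊆ S₁' ⊗ S₂' ⊗ S₃', one has S₁ ⊗ S₂ ⊗ S₃ ⊆ S₁' ⊗ S₂' ⊗ S₃'. That is, the family of threefold Kronecker-product subspaces containing T has a least element (the generalized Kronecker envelope of T). -/

import Mathlib

open Matrix MeasureTheory ProbabilityTheory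

/-- Column-stacking vectorization of a matrix: for `A : Matrix (Fin m) (Fin n) ℝ`,
`vecF A` is the vector in `ℝ^{nm}` with `vecF A (i + m*j) = A i j`
(the columns of `A` stacked on top of each other). -/
def vecF {m n : ℕ} (A : Matrix (Fin m) (Fin n) ℝ) : Fin (n * m) → ℝ :=
  fun x => A (finProdFinEquiv.symm x).2 (finProdFinEquiv.symm x).1

/-- Kronecker product of matrices with flat `Fin` indices:
`(A ⊗ B)_{(i-1)p+k, (j-1)q+l} = A i j * B k l`. -/
def kronF {m n p q : ℕ} (A : Matrix (Fin m) (Fin n) ℝ) (B : Matrix (Fin p) (Fin q) ℝ) :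
    Matrix (Fin (m * p)) (Fin (n * q)) ℝ :=
  Matrix.of fun i j =>
    A (finProdFinEquiv.symm i).1 (finProdFinEquiv.symm j).1 *
      B (finProdFinEquiv.symm i).2 (finProdFinEquiv.symm j).2

/-- Kronecker product of vectors: `(v ⊗ w)_{(i-1)n+j} = v i * w j`. -/
def vkronF {m n : ℕ} (v : Fin m → ℝ) (w : Fin n → ℝ) : Fin (m * n) → ℝ :=
  fun x => v (finProdFinEquiv.symm x).1 * w (finProdFinEquiv.symm x).2

/-- The threefold Kronecker product of subspaces `S₁ ⊆ ℝ^{p₁}`, `S₂ ⊆ ℝ^{p₂}`,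
`S₃ ⊆ ℝ^{p₃}`: the span in `ℝ^{p₁p₂p₃}` of all `v₁ ⊗ v₂ ⊗ v₃` with `vᵢ ∈ Sᵢ`. -/
def skron3 {p1 p2 p3 : ℕ} (S1 : Submodule ℝ (Fin p1 → ℝ)) (S2 : Submodule ℝ (Fin p2 → ℝ))
    (S3 : Submodule ℝ (Fin p3 → ℝ)) : Submodule ℝ (Fin (p1 * (p2 * p3)) → ℝ) :=
  Submodule.span ℝ {x | ∃ v1 ∈ S1, ∃ v2 ∈ S2, ∃ v3 ∈ S3, x = vkronF v1 (vkronF v2 v3)}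

namespace Kron3Envelope

variable {p1 p2 p3 : ℕ}

/-- The index equivalence `Fin p1 × Fin p2 × Fin p3 ≃ Fin (p1 * (p2 * p3))`. -/
def E (p1 p2 p3 : ℕ) : (Fin p1 × Fin p2 × Fin p3) ≃ Fin (p1 * (p2 * p3)) :=
  ((Equiv.refl (Fin p1)).prodCongr finProdFinEquiv).trans finProdFinEquiv

lemma vkron_apply (v1 : Fin p1 → ℝ) (v2 : Fin p2 → ℝ) (v3 : Fin p3 → ℝ)
    (i : Fin p1) (j : Fin p2) (k : Fin p3) :
    vkronF v1 (vkronF v2 v3) (E p1 p2 p3 (i, j, k)) = v1 i * (v2 j * v3 k) := by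
  simp [vkronF, E]

/-- Mode-1 fiber extraction as a linear map. -/
def fib1 (j : Fin p2) (k : Fin p3) : (Fin (p1 * (p2 * p3)) → ℝ) →ₗ[ℝ] (Fin p1 → ℝ) :=
  LinearMap.funLeft ℝ ℝ fun i => E p1 p2 p3 (i, j, k)

def fib2 (i : Fin p1) (k : Fin p3) : (Fin (p1 * (p2 * p3)) → ℝ) →ₗ[ℝ] (Fin p2 → ℝ) :=
  LinearMap.funLeft ℝ ℝ fun j => E p1 p2 p3 (i, j, k)

def fib3 (i : Fin p1) (j : Fin p2) : (Fin (p1 * (p2 * p3)) → ℝ) →ₗ[ℝ] (Fin p3 → ℝ) :=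
  LinearMap.funLeft ℝ ℝ fun k => E p1 p2 p3 (i, j, k)

@[simp] lemma fib1_apply (j : Fin p2) (k : Fin p3) (x : Fin (p1 * (p2 * p3)) → ℝ) (i : Fin p1) :
    fib1 j k x i = x (E p1 p2 p3 (i, j, k)) := rfl
@[simp] lemma fib2_apply (i : Fin p1) (k : Fin p3) (x : Fin (p1 * (p2 * p3)) → ℝ) (j : Fin p2) :
    fib2 i k x j = x (E p1 p2 p3 (i, j, k)) := rfl
@[simp] lemma fib3_apply (i : Fin p1) (j : Fin p2) (x : Fin (p1 * (p2 * p3)) → ℝ) (k : Fin p3) :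
    fib3 i j x k = x (E p1 p2 p3 (i, j, k)) := rfl

lemma skron3_mono {S1 S1' : Submodule ℝ (Fin p1 → ℝ)} {S2 S2' : Submodule ℝ (Fin p2 → ℝ)}
    {S3 S3' : Submodule ℝ (Fin p3 → ℝ)} (h1 : S1 ≤ S1') (h2 : S2 ≤ S2') (h3 : S3 ≤ S3') :
    skron3 S1 S2 S3 ≤ skron3 S1' S2' S3' := by
  apply Submodule.span_mono
  rintro _ ⟨v1, m1, v2, m2, v3, m3, rfl⟩
  exact ⟨v1, h1 m1, v2, h2 m2, v3, h3 m3, rfl⟩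

lemma fib1_mem {S1 : Submodule ℝ (Fin p1 → ℝ)} {S2 : Submodule ℝ (Fin p2 → ℝ)}
    {S3 : Submodule ℝ (Fin p3 → ℝ)} {x : Fin (p1 * (p2 * p3)) → ℝ}
    (hx : x ∈ skron3 S1 S2 S3) (j : Fin p2) (k : Fin p3) : fib1 j k x ∈ S1 := by
  suffices h : skron3 S1 S2 S3 ≤ S1.comap (fib1 j k) from h hx
  refine Submodule.span_le.2 ?_
  rintro _ ⟨v1, m1, v2, m2, v3, m3, rfl⟩
  have : fib1 j k (vkronF v1 (vkronF v2 v3)) = (v2 j * v3 k) • v1 := by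
    ext i; simp [vkron_apply]; ring
  simpa [Submodule.mem_comap, this] using S1.smul_mem _ m1

lemma fib2_mem {S1 : Submodule ℝ (Fin p1 → ℝ)} {S2 : Submodule ℝ (Fin p2 → ℝ)}
    {S3 : Submodule ℝ (Fin p3 → ℝ)} {x : Fin (p1 * (p2 * p3)) → ℝ}
    (hx : x ∈ skron3 S1 S2 S3) (i : Fin p1) (k : Fin p3) : fib2 i k x ∈ S2 := by
  suffices h : skron3 S1 S2 S3 ≤ S2.comap (fib2 i k) from h hx
  refine Submodule.span_le.2 ?_
  rintro _ ⟨v1, m1, v2, m2, v3, m3, rfl⟩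
  have : fib2 i k (vkronF v1 (vkronF v2 v3)) = (v1 i * v3 k) • v2 := by
    ext j; simp [vkron_apply]; ring
  simpa [Submodule.mem_comap, this] using S2.smul_mem _ m2

lemma fib3_mem {S1 : Submodule ℝ (Fin p1 → ℝ)} {S2 : Submodule ℝ (Fin p2 → ℝ)}
    {S3 : Submodule ℝ (Fin p3 → ℝ)} {x : Fin (p1 * (p2 * p3)) → ℝ}
    (hx : x ∈ skron3 S1 S2 S3) (i : Fin p1) (j : Fin p2) : fib3 i j x ∈ S3 := by
  suffices h : skron3 S1 S2 S3 ≤ S3.comap (fib3 i j) from h hx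
  refine Submodule.span_le.2 ?_
  rintro _ ⟨v1, m1, v2, m2, v3, m3, rfl⟩
  have : fib3 i j (vkronF v1 (vkronF v2 v3)) = (v1 i * v2 j) • v3 := by
    ext k; simp [vkron_apply]; ring
  simpa [Submodule.mem_comap, this] using S3.smul_mem _ m3

/-- Main structural lemma: if all fibers of `x` lie in the respective subspaces,
then `x` belongs to the Kronecker product subspace. -/
lemma mem_skron3_of_fib (S1 : Submodule ℝ (Fin p1 → ℝ)) (S2 : Submodule ℝ (Fin p2 → ℝ))
    (S3 : Submodule ℝ (Fin p3 → ℝ)) (x : Fin (p1 * (p2 * p3)) → ℝ)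
    (hf1 : ∀ j k, fib1 j k x ∈ S1) (hf2 : ∀ i k, fib2 i k x ∈ S2)
    (hf3 : ∀ i j, fib3 i j x ∈ S3) : x ∈ skron3 S1 S2 S3 := by
  classical
  obtain ⟨q1, hq1⟩ := Submodule.exists_isCompl S1
  obtain ⟨q2, hq2⟩ := Submodule.exists_isCompl S2
  set b1 := Module.finBasis ℝ S1 with hb1
  set b2 := Module.finBasis ℝ S2 with hb2
  set π1 : (Fin p1 → ℝ) →ₗ[ℝ] S1 := S1.linearProjOfIsCompl q1 hq1 with hπ1
  set π2 : (Fin p2 → ℝ) →ₗ[ℝ] S2 := S2.linearProjOfIsCompl q2 hq2 with hπ2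
  set ℓ1 : Fin (Module.finrank ℝ S1) → ((Fin p1 → ℝ) →ₗ[ℝ] ℝ) :=
    fun a => (b1.coord a).comp π1 with hℓ1
  set ℓ2 : Fin (Module.finrank ℝ S2) → ((Fin p2 → ℝ) →ₗ[ℝ] ℝ) :=
    fun b => (b2.coord b).comp π2 with hℓ2
  set u : Fin (Module.finrank ℝ S1) → (Fin p1 → ℝ) := fun a => (b1 a : Fin p1 → ℝ) with hu
  set vB : Fin (Module.finrank ℝ S2) → (Fin p2 → ℝ) := fun b => (b2 b : Fin p2 → ℝ) with hvB
  have hexp1 : ∀ v, v ∈ S1 → v = ∑ a, ℓ1 a v • u a := by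
    intro v hv
    have hπ : π1 v = ⟨v, hv⟩ := Submodule.linearProjOfIsCompl_apply_left hq1 ⟨v, hv⟩
    calc v = ((⟨v, hv⟩ : S1) : Fin p1 → ℝ) := rfl
      _ = ((∑ a, b1.repr ⟨v, hv⟩ a • b1 a : S1) : Fin p1 → ℝ) := by rw [b1.sum_repr ⟨v, hv⟩]
      _ = ∑ a, b1.repr ⟨v, hv⟩ a • u a := by
          simp only [hu, Submodule.coe_sum, Submodule.coe_smul]
      _ = ∑ a, ℓ1 a v • u a := by
          refine Finset.sum_congr rfl fun a _ => ?_
          simp [hℓ1, hπ, Module.Basis.coord_apply]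
  have hexp2 : ∀ w, w ∈ S2 → w = ∑ b, ℓ2 b w • vB b := by
    intro w hw
    have hπ : π2 w = ⟨w, hw⟩ := Submodule.linearProjOfIsCompl_apply_left hq2 ⟨w, hw⟩
    calc w = ((⟨w, hw⟩ : S2) : Fin p2 → ℝ) := rfl
      _ = ((∑ b, b2.repr ⟨w, hw⟩ b • b2 b : S2) : Fin p2 → ℝ) := by rw [b2.sum_repr ⟨w, hw⟩]
      _ = ∑ b, b2.repr ⟨w, hw⟩ b • vB b := by
          simp only [hvB, Submodule.coe_sum, Submodule.coe_smul]
      _ = ∑ b, ℓ2 b w • vB b := by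
          refine Finset.sum_congr rfl fun b _ => ?_
          simp [hℓ2, hπ, Module.Basis.coord_apply]
  set w : Fin (Module.finrank ℝ S1) → Fin p3 → Fin p2 → ℝ :=
    fun a k j => ℓ1 a (fib1 j k x) with hwdef
  have hw : ∀ a k, w a k ∈ S2 := by
    intro a k
    have hrepr : w a k = ∑ i, (ℓ1 a fun i' => if i = i' then 1 else 0) • fib2 i k x := by
      ext j
      have := LinearMap.pi_apply_eq_sum_univ (ℓ1 a) (fib1 j k x)
      simp only [hwdef, this, Finset.sum_apply, Pi.smul_apply, smul_eq_mul, fib1_apply,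
        fib2_apply]
      exact Finset.sum_congr rfl fun i _ => mul_comm _ _
    rw [hrepr]
    exact Submodule.sum_mem _ fun i _ => Submodule.smul_mem _ _ (hf2 i k)
  set z : Fin (Module.finrank ℝ S1) → Fin (Module.finrank ℝ S2) → Fin p3 → ℝ :=
    fun a b k => ℓ2 b (w a k) with hzdef
  have hz : ∀ a b, z a b ∈ S3 := by
    intro a b
    have hrepr : z a b = ∑ j, (ℓ2 b fun j' => if j = j' then 1 else 0) •
        ∑ i, (ℓ1 a fun i' => if i = i' then 1 else 0) • fib3 i j x := by
      ext k
      have h2 := LinearMap.pi_apply_eq_sum_univ (ℓ2 b) (w a k)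
      simp only [hzdef, h2, Finset.sum_apply, Pi.smul_apply, smul_eq_mul, fib3_apply]
      refine Finset.sum_congr rfl fun j _ => ?_
      have h1 := LinearMap.pi_apply_eq_sum_univ (ℓ1 a) (fib1 j k x)
      simp only [hwdef, h1, Finset.sum_apply, Pi.smul_apply, smul_eq_mul, fib1_apply]
      rw [Finset.sum_mul, Finset.mul_sum]
      exact Finset.sum_congr rfl fun i _ => by ring
    rw [hrepr]
    exact Submodule.sum_mem _ fun j _ => Submodule.smul_mem _ _
      (Submodule.sum_mem _ fun i _ => Submodule.smul_mem _ _ (hf3 i j))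
  have hx : x = ∑ a, ∑ b, vkronF (u a) (vkronF (vB b) (z a b)) := by
    funext y
    obtain ⟨⟨i, j, k⟩, rfl⟩ : ∃ t, E p1 p2 p3 t = y := ⟨(E p1 p2 p3).symm y, by simp⟩
    have e2 : ∀ a, ∑ b, vB b j * z a b k = ℓ1 a (fib1 j k x) := by
      intro a
      have := congrFun (hexp2 (w a k) (hw a k)) j
      simp only [Finset.sum_apply, Pi.smul_apply, smul_eq_mul] at this
      calc ∑ b, vB b j * z a b k = ∑ b, ℓ2 b (w a k) * vB b j :=
            Finset.sum_congr rfl fun b _ => mul_comm _ _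
        _ = w a k j := this.symm
        _ = ℓ1 a (fib1 j k x) := rfl
    have e1 : ∑ a, ℓ1 a (fib1 j k x) * u a i = x (E p1 p2 p3 (i, j, k)) := by
      have := congrFun (hexp1 (fib1 j k x) (hf1 j k)) i
      simp only [Finset.sum_apply, Pi.smul_apply, smul_eq_mul] at this
      rw [← this]; rfl
    simp only [Finset.sum_apply]
    calc x (E p1 p2 p3 (i, j, k)) = ∑ a, ℓ1 a (fib1 j k x) * u a i := e1.symm
      _ = ∑ a, ∑ b, vkronF (u a) (vkronF (vB b) (z a b)) (E p1 p2 p3 (i, j, k)) := by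
          refine Finset.sum_congr rfl fun a _ => ?_
          rw [mul_comm, ← e2 a, Finset.mul_sum]
          exact Finset.sum_congr rfl fun b _ => (vkron_apply _ _ _ _ _ _).symm
  rw [hx]
  exact Submodule.sum_mem _ fun a _ => Submodule.sum_mem _ fun b _ =>
    Submodule.subset_span ⟨u a, SetLike.coe_mem (b1 a), vB b, SetLike.coe_mem (b2 b),
      z a b, hz a b, rfl⟩

end Kron3Envelope

/-- Existence of the generalized (threefold) Kronecker envelope: the family of threefold
Kronecker-product subspaces containing a given subspace `T ⊆ ℝ^{p₁p₂p₃}` has a least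
element. -/
theorem kron3_envelope_exists (p1 p2 p3 : ℕ) (h1 : 0 < p1) (h2 : 0 < p2) (h3 : 0 < p3)
    (T : Submodule ℝ (Fin (p1 * (p2 * p3)) → ℝ)) :
    ∃ (S1 : Submodule ℝ (Fin p1 → ℝ)) (S2 : Submodule ℝ (Fin p2 → ℝ))
      (S3 : Submodule ℝ (Fin p3 → ℝ)),
      T ≤ skron3 S1 S2 S3 ∧
        ∀ (S1' : Submodule ℝ (Fin p1 → ℝ)) (S2' : Submodule ℝ (Fin p2 → ℝ))
          (S3' : Submodule ℝ (Fin p3 → ℝ)),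
          T ≤ skron3 S1' S2' S3' → skron3 S1 S2 S3 ≤ skron3 S1' S2' S3' := by
  classical
  refine ⟨Submodule.span ℝ {v | ∃ x ∈ T, ∃ j k, v = Kron3Envelope.fib1 j k x},
    Submodule.span ℝ {v | ∃ x ∈ T, ∃ i k, v = Kron3Envelope.fib2 i k x},
    Submodule.span ℝ {v | ∃ x ∈ T, ∃ i j, v = Kron3Envelope.fib3 i j x}, ?_, ?_⟩
  · intro x hx
    exact Kron3Envelope.mem_skron3_of_fib _ _ _ x
      (fun j k => Submodule.subset_span ⟨x, hx, j, k, rfl⟩)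
      (fun i k => Submodule.subset_span ⟨x, hx, i, k, rfl⟩)
      (fun i j => Submodule.subset_span ⟨x, hx, i, j, rfl⟩)
  · intro S1' S2' S3' hT'
    refine Kron3Envelope.skron3_mono ?_ ?_ ?_
    · refine Submodule.span_le.2 ?_
      rintro _ ⟨x, hx, j, k, rfl⟩
      exact Kron3Envelope.fib1_mem (hT' hx) j k
    · refine Submodule.span_le.2 ?_
      rintro _ ⟨x, hx, i, k, rfl⟩
      exact Kron3Envelope.fib2_mem (hT' hx) i k
    · refine Submodule.span_le.2 ?_
      rintro _ ⟨x, hx, i, j, rfl⟩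
      exact Kron3Envelope.fib3_mem (hT' hx) i j
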